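/- For all integers p ≥ 1 and n ≥ 2, A(p,n,n−2) = binom(n,3)·(3^p − 1) + 3·binom(n,4)·(2^p − 1)^2. -/

import Mathlib

set_option linter.unusedSectionVars false
set_option linter.unnecessarySimpa false
set_option linter.unusedVariables false
open Equiv MulAction Finset

/-- `A p n k` is the number of `p`-tuples of pairwise commuting permutations of
`{1,…,n}` whose generated subgroup acts on `{1,…,n}` with exactly `k` orbits. -/
noncomputable def A (p n k : ℕ) : ℕ :=
  Nat.card {σ : Fin p → Equiv.Perm (Fin n) //
    (∀ i j, Commute (σ i) (σ j)) ∧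
    Nat.card (MulAction.orbitRel.Quotient
      (Subgroup.closure (Set.range σ)) (Fin n)) = k}

variable {p n : ℕ}



/-- extract the two elements of a 2-element finset -/
noncomputable def el2 {α : Type*} [DecidableEq α] (t : Finset α) (h : t.card = 2) : α × α :=
  ⟨(Finset.card_eq_two.mp h).choose, (Finset.card_eq_two.mp h).choose_spec.choose⟩

lemma el2_spec {α : Type*} [DecidableEq α] (t : Finset α) (h : t.card = 2) :
    (el2 t h).1 ≠ (el2 t h).2 ∧ t = {(el2 t h).1, (el2 t h).2} :=
  (Finset.card_eq_two.mp h).choose_spec.choose_spec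

noncomputable def el3 {α : Type*} [DecidableEq α] (s : Finset α) (h : s.card = 3) : α × α × α :=
  ⟨(Finset.card_eq_three.mp h).choose, (Finset.card_eq_three.mp h).choose_spec.choose,
   (Finset.card_eq_three.mp h).choose_spec.choose_spec.choose⟩

lemma el3_spec {α : Type*} [DecidableEq α] (s : Finset α) (h : s.card = 3) :
    (el3 s h).1 ≠ (el3 s h).2.1 ∧ (el3 s h).1 ≠ (el3 s h).2.2 ∧ (el3 s h).2.1 ≠ (el3 s h).2.2 ∧
      s = {(el3 s h).1, (el3 s h).2.1, (el3 s h).2.2} :=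
  (Finset.card_eq_three.mp h).choose_spec.choose_spec.choose_spec

section Closure

variable (τ : Fin p → Equiv.Perm (Fin n))

lemma mem_cl (i : Fin p) : τ i ∈ Subgroup.closure (Set.range τ) :=
  Subgroup.subset_closure (Set.mem_range_self i)

lemma commute_cl (hc : ∀ i j, Commute (τ i) (τ j)) (i : Fin p) :
    ∀ g ∈ Subgroup.closure (Set.range τ), Commute (τ i) g := fun g hg =>
  Subgroup.closure_induction
    (fun x hx => by obtain ⟨j, rfl⟩ := hx; exact hc i j) (Commute.one_right _)
    (fun x y _ _ hx hy => hx.mul_right hy) (fun x _ hx => hx.inv_right) hg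

lemma orbit_iff (x y : Fin n) :
    y ∈ orbit (Subgroup.closure (Set.range τ)) x ↔
      ∃ g ∈ Subgroup.closure (Set.range τ), g x = y := by
  rw [mem_orbit_iff]
  constructor
  · rintro ⟨⟨g, hg⟩, rfl⟩; exact ⟨g, hg, rfl⟩
  · rintro ⟨g, hg, rfl⟩; exact ⟨⟨g, hg⟩, rfl⟩

lemma fix_cl (x : Fin n) (h : ∀ i, τ i x = x) :
    ∀ g ∈ Subgroup.closure (Set.range τ), g x = x := fun g hg =>
  Subgroup.closure_induction
    (fun e he => by obtain ⟨j, rfl⟩ := he; exact h j) rfl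
    (fun e f _ _ he hf => by simp [Equiv.Perm.mul_apply, hf, he])
    (fun e _ he => by
      have := he; exact (Equiv.eq_symm_apply e).mpr he ▸ by
        simpa using congrArg e.symm he) hg

end Closure

lemma orbit_iff' (τ : Fin p → Equiv.Perm (Fin n)) (x y : Fin n) :
    y ∈ orbit (Subgroup.closure (Set.range τ)) x ↔
      ∃ g ∈ Subgroup.closure (Set.range τ), g x = y := by
  rw [mem_orbit_iff]
  constructor
  · rintro ⟨⟨g, hg⟩, rfl⟩; exact ⟨g, hg, rfl⟩
  · rintro ⟨g, hg, rfl⟩; exact ⟨⟨g, hg⟩, rfl⟩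

lemma card_quot (τ : Fin p → Equiv.Perm (Fin n)) {β : Type} [Fintype β] (f : Fin n → β)
    (h1 : ∀ i x, f (τ i x) = f x)
    (h2 : ∀ x y, f x = f y → y ∈ orbit (Subgroup.closure (Set.range τ)) x)
    (h3 : Function.Surjective f) :
    Nat.card (orbitRel.Quotient (Subgroup.closure (Set.range τ)) (Fin n)) = Fintype.card β := by
  have hg : ∀ g ∈ Subgroup.closure (Set.range τ), ∀ x, f (g x) = f x := fun g hg =>
    Subgroup.closure_induction
      (fun e he x => by obtain ⟨j, rfl⟩ := he; exact h1 j x) (fun x => rfl)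
      (fun e e' _ _ he he' x => by
        simp only [Equiv.Perm.mul_apply]; rw [he, he'])
      (fun e _ he x => by conv_rhs => rw [show x = e (e⁻¹ x) by simp]
                          rw [he]) hg
  have key : ∀ a b : Fin n, (orbitRel (Subgroup.closure (Set.range τ)) (Fin n)) a b → f a = f b := by
    intro a b hab
    rw [orbitRel_apply, orbit_iff'] at hab
    obtain ⟨g, hgm, rfl⟩ := hab
    exact hg g hgm b
  let F : orbitRel.Quotient (Subgroup.closure (Set.range τ)) (Fin n) → β :=
    Quotient.lift f key
  have hbij : Function.Bijective F := by
    constructor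
    · intro q q'
      induction q using Quotient.inductionOn'
      induction q' using Quotient.inductionOn'
      rename_i x y
      intro hxy
      have : f x = f y := hxy
      apply Quotient.sound'
      rw [orbitRel_apply]
      exact h2 y x this.symm
    · intro b
      obtain ⟨x, rfl⟩ := h3 b
      exact ⟨Quotient.mk'' x, rfl⟩
  rw [Nat.card_congr (Equiv.ofBijective F hbij), Nat.card_eq_fintype_card]

def rho (a b c : Fin n) : Equiv.Perm (Fin n) := Equiv.swap a b * Equiv.swap b c

section rhotab
variable {a b c : Fin n} (hab : a ≠ b) (hac : a ≠ c) (hbc : b ≠ c)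
include hab hac hbc

lemma rho_a : rho a b c a = b := by
  simp [rho, Equiv.Perm.mul_apply, Equiv.swap_apply_of_ne_of_ne hab hac]
lemma rho_b : rho a b c b = c := by
  simp [rho, Equiv.Perm.mul_apply, Equiv.swap_apply_of_ne_of_ne hac.symm hbc.symm]
omit hab hac hbc in
lemma rho_c : rho a b c c = a := by
  simp [rho, Equiv.Perm.mul_apply]

lemma rho2_a : (rho a b c ^ 2) a = c := by
  rw [pow_two, Equiv.Perm.mul_apply, rho_a hab hac hbc, rho_b hab hac hbc]
lemma rho2_b : (rho a b c ^ 2) b = a := by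
  rw [pow_two, Equiv.Perm.mul_apply, rho_b hab hac hbc, rho_c]
lemma rho2_c : (rho a b c ^ 2) c = b := by
  rw [pow_two, Equiv.Perm.mul_apply, rho_c, rho_a hab hac hbc]
end rhotab

lemma rho_fix {a b c x : Fin n} (h1 : x ≠ a) (h2 : x ≠ b) (h3 : x ≠ c) : rho a b c x = x := by
  simp [rho, Equiv.Perm.mul_apply, Equiv.swap_apply_of_ne_of_ne h2 h3,
    Equiv.swap_apply_of_ne_of_ne h1 h2]

lemma rho_pow_fix {a b c x : Fin n} (h1 : x ≠ a) (h2 : x ≠ b) (h3 : x ≠ c) (k : ℕ) :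
    (rho a b c ^ k) x = x := by
  induction k with
  | zero => simp
  | succ m ih => rw [pow_succ, Equiv.Perm.mul_apply, rho_fix h1 h2 h3, ih]

lemma rho_cube {a b c : Fin n} (hab : a ≠ b) (hac : a ≠ c) (hbc : b ≠ c) :
    rho a b c ^ 3 = 1 := by
  ext x
  rcases eq_or_ne x a with rfl | h1
  · simp [pow_succ, Equiv.Perm.mul_apply, rho_a hab hac hbc, rho_b hab hac hbc,
      rho_c, pow_two]
  rcases eq_or_ne x b with rfl | h2
  · simp [pow_succ, Equiv.Perm.mul_apply, rho_a hab hac hbc, rho_b hab hac hbc,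
      rho_c, pow_two]
  rcases eq_or_ne x c with rfl | h3
  · simp [pow_succ, Equiv.Perm.mul_apply, rho_a hab hac hbc, rho_b hab hac hbc,
      rho_c, pow_two]
  · simp [rho_pow_fix h1 h2 h3]

lemma zmod3_cases (z : ZMod 3) : z = 0 ∨ z = 1 ∨ z = 2 := by
  revert z; decide
lemma zmod2_cases (z : ZMod 2) : z = 0 ∨ z = 1 := by revert z; decide
lemma zmod3_val0 : (0 : ZMod 3).val = 0 := rfl
lemma zmod3_val1 : (1 : ZMod 3).val = 1 := rfl
lemma zmod3_val2 : (2 : ZMod 3).val = 2 := rfl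
lemma zmod2_val0 : (0 : ZMod 2).val = 0 := rfl
lemma zmod2_val1 : (1 : ZMod 2).val = 1 := rfl

noncomputable def mk1 (a b c : Fin n) (v : Fin p → ZMod 3) : Fin p → Equiv.Perm (Fin n) :=
  fun i => rho a b c ^ (v i).val

noncomputable def mk2 (a b c d : Fin n) (u w : Fin p → ZMod 2) : Fin p → Equiv.Perm (Fin n) :=
  fun i => Equiv.swap a b ^ (u i).val * Equiv.swap c d ^ (w i).val

lemma swap_pow_fix {a b x : Fin n} (h1 : x ≠ a) (h2 : x ≠ b) (k : ℕ) :
    (Equiv.swap a b ^ k) x = x := by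
  induction k with
  | zero => simp
  | succ m ih => rw [pow_succ, Equiv.Perm.mul_apply, Equiv.swap_apply_of_ne_of_ne h1 h2, ih]

section mk1lemmas
variable {a b c : Fin n} (hab : a ≠ b) (hac : a ≠ c) (hbc : b ≠ c) {v : Fin p → ZMod 3}
include hab hac hbc

lemma mk1_fix {x : Fin n} (h1 : x ≠ a) (h2 : x ≠ b) (h3 : x ≠ c) (i : Fin p) :
    mk1 a b c v i x = x := rho_pow_fix h1 h2 h3 _

lemma mk1_0 {i : Fin p} (h : v i = 0) : mk1 a b c v i = 1 := by
  simp [mk1, h, zmod3_val0]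
lemma mk1_1 {i : Fin p} (h : v i = 1) : mk1 a b c v i = rho a b c := by
  simp [mk1, h, zmod3_val1]
lemma mk1_2 {i : Fin p} (h : v i = 2) : mk1 a b c v i = rho a b c ^ 2 := by
  simp [mk1, h, zmod3_val2]

lemma mk1_mem {x : Fin n} (hx : x = a ∨ x = b ∨ x = c) (i : Fin p) :
    mk1 a b c v i x = a ∨ mk1 a b c v i x = b ∨ mk1 a b c v i x = c := by
  rcases zmod3_cases (v i) with h | h | h
  · rw [mk1_0 hab hac hbc h]; simpa using hx
  · rw [mk1_1 hab hac hbc h]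
    rcases hx with rfl | rfl | rfl
    · rw [rho_a hab hac hbc]; tauto
    · rw [rho_b hab hac hbc]; tauto
    · rw [rho_c]; tauto
  · rw [mk1_2 hab hac hbc h]
    rcases hx with rfl | rfl | rfl
    · rw [rho2_a hab hac hbc]; tauto
    · rw [rho2_b hab hac hbc]; tauto
    · rw [rho2_c hab hac hbc]; tauto

lemma mk1_card (hv : v ≠ 0) :
    Nat.card (orbitRel.Quotient (Subgroup.closure (Set.range (mk1 a b c v))) (Fin n)) = n - 2 := by
  classical
  set s : Finset (Fin n) := {a, b, c} with hsdef
  have hs : s.card = 3 := Finset.card_eq_three.mpr ⟨a, b, c, hab, hac, hbc, rfl⟩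
  have hmem : ∀ x, x ∈ s ↔ x = a ∨ x = b ∨ x = c := by
    intro x; simp [hsdef]
  -- rho is in the closure
  obtain ⟨i, hi⟩ : ∃ i, v i ≠ 0 := Function.ne_iff.mp hv
  have hrho4 : rho a b c ^ 4 = rho a b c := by
    rw [show (4:ℕ) = 3+1 from rfl, pow_succ, rho_cube hab hac hbc, one_mul]
  have hrhoG : rho a b c ∈ Subgroup.closure (Set.range (mk1 a b c v)) := by
    rcases zmod3_cases (v i) with h | h | h
    · exact absurd h hi
    · rw [← mk1_1 hab hac hbc h]; exact Subgroup.subset_closure (Set.mem_range_self i)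
    · have : rho a b c = (mk1 a b c v i) ^ 2 := by
        rw [mk1_2 hab hac hbc h, ← pow_mul, show 2*2 = 4 from rfl, hrho4]
      rw [this]
      exact Subgroup.pow_mem _ (Subgroup.subset_closure (Set.mem_range_self i)) 2
  have hrho2G : rho a b c ^ 2 ∈ Subgroup.closure (Set.range (mk1 a b c v)) :=
    Subgroup.pow_mem _ hrhoG 2
  have h1G : (1 : Equiv.Perm (Fin n)) ∈ Subgroup.closure (Set.range (mk1 a b c v)) :=
    Subgroup.one_mem _
  have horb : ∀ x y : Fin n, x ∈ s → y ∈ s →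
      y ∈ orbit (Subgroup.closure (Set.range (mk1 a b c v))) x := by
    intro x y hx hy
    rw [orbit_iff']
    rw [hmem] at hx hy
    rcases hx with rfl | rfl | rfl <;> rcases hy with rfl | rfl | rfl
    · exact ⟨1, h1G, rfl⟩
    · exact ⟨_, hrhoG, rho_a hab hac hbc⟩
    · exact ⟨_, hrho2G, rho2_a hab hac hbc⟩
    · exact ⟨_, hrho2G, rho2_b hab hac hbc⟩
    · exact ⟨1, h1G, rfl⟩
    · exact ⟨_, hrhoG, rho_b hab hac hbc⟩
    · exact ⟨_, hrhoG, rho_c⟩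
    · exact ⟨_, hrho2G, rho2_c hab hac hbc⟩
    · exact ⟨1, h1G, rfl⟩
  have hcard3n : 3 ≤ n := by
    have := Finset.card_le_univ s
    simpa [hs] using this
  rw [card_quot (mk1 a b c v)
    (f := fun x => if h : x ∈ s then Sum.inr () else Sum.inl (⟨x, h⟩ : {x : Fin n // x ∉ s}))]
  · rw [Fintype.card_sum, Fintype.card_subtype_compl, Fintype.card_coe, hs,
      Fintype.card_fin, Fintype.card_unit]
    omega
  · intro i' x
    by_cases hx : x ∈ s
    · have : mk1 a b c v i' x ∈ s := by
        rw [hmem]; exact mk1_mem hab hac hbc ((hmem x).mp hx) i'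
      simp [hx, this]
    · have hfix : mk1 a b c v i' x = x := by
        rw [hmem] at hx; push_neg at hx
        exact mk1_fix hab hac hbc hx.1 hx.2.1 hx.2.2 i'
      rw [hfix]
  · intro x y hxy
    by_cases hx : x ∈ s <;> by_cases hy : y ∈ s
    · exact horb x y hx hy
    · simp [hx, hy] at hxy
    · simp [hx, hy] at hxy
    · simp only [dif_neg hx, dif_neg hy, Sum.inl.injEq, Subtype.mk.injEq] at hxy
      rw [hxy]; exact mem_orbit_self y
  · intro z
    rcases z with ⟨x, hx⟩ | u
    · exact ⟨x, by simp [hx]⟩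
    · exact ⟨a, by simp [hmem a |>.mpr (Or.inl rfl)]⟩
end mk1lemmas
section mk2lemmas
variable {a b c d : Fin n} (hab : a ≠ b) (hcd : c ≠ d)
  (hac : a ≠ c) (had : a ≠ d) (hbc : b ≠ c) (hbd : b ≠ d)
  {u w : Fin p → ZMod 2}
include hab hcd hac had hbc hbd

omit hab hcd in
lemma mk2_fix {x : Fin n} (h1 : x ≠ a) (h2 : x ≠ b) (h3 : x ≠ c) (h4 : x ≠ d) (i : Fin p) :
    mk2 a b c d u w i x = x := by
  simp only [mk2, Equiv.Perm.mul_apply]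
  rw [swap_pow_fix h3 h4, swap_pow_fix h1 h2]

omit hab hcd hbc hbd in
lemma mk2_a0 {i : Fin p} (h : u i = 0) : mk2 a b c d u w i a = a := by
  simp only [mk2, Equiv.Perm.mul_apply]
  rw [swap_pow_fix hac had, h, zmod2_val0, pow_zero, Equiv.Perm.one_apply]
omit hab hcd hbc hbd in
lemma mk2_a1 {i : Fin p} (h : u i = 1) : mk2 a b c d u w i a = b := by
  simp only [mk2, Equiv.Perm.mul_apply]
  rw [swap_pow_fix hac had, h, zmod2_val1, pow_one, Equiv.swap_apply_left]
omit hab hcd hac had in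
lemma mk2_b0 {i : Fin p} (h : u i = 0) : mk2 a b c d u w i b = b := by
  simp only [mk2, Equiv.Perm.mul_apply]
  rw [swap_pow_fix hbc hbd, h, zmod2_val0, pow_zero, Equiv.Perm.one_apply]
omit hab hcd hac had in
lemma mk2_b1 {i : Fin p} (h : u i = 1) : mk2 a b c d u w i b = a := by
  simp only [mk2, Equiv.Perm.mul_apply]
  rw [swap_pow_fix hbc hbd, h, zmod2_val1, pow_one, Equiv.swap_apply_right]
omit hab hcd hbd had in
lemma mk2_c0 {i : Fin p} (h : w i = 0) : mk2 a b c d u w i c = c := by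
  simp only [mk2, Equiv.Perm.mul_apply]
  rw [h, zmod2_val0, pow_zero, Equiv.Perm.one_apply, swap_pow_fix hac.symm hbc.symm]
omit hab hcd hac hbc in
lemma mk2_c1 {i : Fin p} (h : w i = 1) : mk2 a b c d u w i c = d := by
  simp only [mk2, Equiv.Perm.mul_apply]
  rw [h, zmod2_val1, pow_one, Equiv.swap_apply_left, swap_pow_fix had.symm hbd.symm]
omit hab hcd hac hbc in
lemma mk2_d0 {i : Fin p} (h : w i = 0) : mk2 a b c d u w i d = d := by
  simp only [mk2, Equiv.Perm.mul_apply]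
  rw [h, zmod2_val0, pow_zero, Equiv.Perm.one_apply, swap_pow_fix had.symm hbd.symm]
omit hab hcd had hbd in
lemma mk2_d1 {i : Fin p} (h : w i = 1) : mk2 a b c d u w i d = c := by
  simp only [mk2, Equiv.Perm.mul_apply]
  rw [h, zmod2_val1, pow_one, Equiv.swap_apply_right, swap_pow_fix hac.symm hbc.symm]

omit hab hcd in
lemma mk2_pres1 {x : Fin n} (hx : x = a ∨ x = b) (i : Fin p) :
    mk2 a b c d u w i x = a ∨ mk2 a b c d u w i x = b := by
  rcases zmod2_cases (u i) with h | h <;> rcases hx with rfl | rfl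
  · rw [mk2_a0 hac had h]; tauto
  · rw [mk2_b0 hbc hbd h]; tauto
  · rw [mk2_a1 hac had h]; tauto
  · rw [mk2_b1 hbc hbd h]; tauto

omit hab hcd in
lemma mk2_pres2 {x : Fin n} (hx : x = c ∨ x = d) (i : Fin p) :
    mk2 a b c d u w i x = c ∨ mk2 a b c d u w i x = d := by
  rcases zmod2_cases (w i) with h | h <;> rcases hx with rfl | rfl
  · rw [mk2_c0 hac hbc h]; tauto
  · rw [mk2_d0 had hbd h]; tauto
  · rw [mk2_c1 had hbd h]; tauto
  · rw [mk2_d1 hac hbc h]; tauto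

lemma mk2_card (hu : u ≠ 0) (hw : w ≠ 0) :
    Nat.card (orbitRel.Quotient (Subgroup.closure (Set.range (mk2 a b c d u w))) (Fin n)) = n - 2 := by
  classical
  set s : Finset (Fin n) := {a, b, c, d} with hsdef
  have hs : s.card = 4 := by
    rw [hsdef]
    rw [Finset.card_insert_of_notMem (by simp [hab, hac, had]),
      Finset.card_insert_of_notMem (by simp [hbc, hbd]),
      Finset.card_insert_of_notMem (by simp [hcd])]
    simp
  have hmem : ∀ x, x ∈ s ↔ (x = a ∨ x = b) ∨ (x = c ∨ x = d) := by
    intro x; simp [hsdef]; tauto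
  obtain ⟨i1, hi1⟩ : ∃ i, u i ≠ 0 := Function.ne_iff.mp hu
  obtain ⟨i2, hi2⟩ : ∃ i, w i ≠ 0 := Function.ne_iff.mp hw
  have hu1 : u i1 = 1 := (zmod2_cases (u i1)).resolve_left hi1
  have hw1 : w i2 = 1 := (zmod2_cases (w i2)).resolve_left hi2
  have hg1 : mk2 a b c d u w i1 ∈ Subgroup.closure (Set.range (mk2 a b c d u w)) :=
    Subgroup.subset_closure (Set.mem_range_self i1)
  have hg2 : mk2 a b c d u w i2 ∈ Subgroup.closure (Set.range (mk2 a b c d u w)) :=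
    Subgroup.subset_closure (Set.mem_range_self i2)
  have h1G : (1 : Equiv.Perm (Fin n)) ∈ Subgroup.closure (Set.range (mk2 a b c d u w)) :=
    Subgroup.one_mem _
  have horb1 : ∀ x y : Fin n, (x = a ∨ x = b) → (y = a ∨ y = b) →
      y ∈ orbit (Subgroup.closure (Set.range (mk2 a b c d u w))) x := by
    intro x y hx hy
    rw [orbit_iff']
    rcases hx with rfl | rfl <;> rcases hy with rfl | rfl
    · exact ⟨1, h1G, rfl⟩
    · exact ⟨_, hg1, mk2_a1 hac had hu1⟩
    · exact ⟨_, hg1, mk2_b1 hbc hbd hu1⟩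
    · exact ⟨1, h1G, rfl⟩
  have horb2 : ∀ x y : Fin n, (x = c ∨ x = d) → (y = c ∨ y = d) →
      y ∈ orbit (Subgroup.closure (Set.range (mk2 a b c d u w))) x := by
    intro x y hx hy
    rw [orbit_iff']
    rcases hx with rfl | rfl <;> rcases hy with rfl | rfl
    · exact ⟨1, h1G, rfl⟩
    · exact ⟨_, hg2, mk2_c1 had hbd hw1⟩
    · exact ⟨_, hg2, mk2_d1 hac hbc hw1⟩
    · exact ⟨1, h1G, rfl⟩
  have hcard4n : 4 ≤ n := by
    have := Finset.card_le_univ s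
    simpa [hs] using this
  rw [card_quot (mk2 a b c d u w)
    (f := fun x => if h : x ∈ s then (if x = a ∨ x = b then Sum.inr true else Sum.inr false)
      else Sum.inl (⟨x, h⟩ : {x : Fin n // x ∉ s}))]
  · rw [Fintype.card_sum, Fintype.card_subtype_compl, Fintype.card_coe, hs,
      Fintype.card_fin, Fintype.card_bool]
    omega
  · intro i x
    by_cases hx : x ∈ s
    · rcases (hmem x).mp hx with hx12 | hx34
      · have h1 := mk2_pres1 (u := u) (w := w) hac had hbc hbd hx12 i
        have hms : mk2 a b c d u w i x ∈ s := (hmem _).mpr (Or.inl h1)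
        rw [dif_pos hx, dif_pos hms, if_pos h1, if_pos hx12]
      · have h2 := mk2_pres2 (u := u) (w := w) hac had hbc hbd hx34 i
        have hms : mk2 a b c d u w i x ∈ s := (hmem _).mpr (Or.inr h2)
        have hno1 : ¬ (x = a ∨ x = b) := by
          rcases hx34 with rfl | rfl
          · push_neg; exact ⟨hac.symm, hbc.symm⟩
          · push_neg; exact ⟨had.symm, hbd.symm⟩
        have hno2 : ¬ (mk2 a b c d u w i x = a ∨ mk2 a b c d u w i x = b) := by
          rcases h2 with h' | h' <;> rw [h'] <;> push_neg
          · exact ⟨hac.symm, hbc.symm⟩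
          · exact ⟨had.symm, hbd.symm⟩
        rw [dif_pos hx, dif_pos hms, if_neg hno2, if_neg hno1]
    · have hfix : mk2 a b c d u w i x = x := by
        rw [hmem] at hx; push_neg at hx
        exact mk2_fix hac had hbc hbd hx.1.1 hx.1.2 hx.2.1 hx.2.2 i
      rw [hfix]
  · intro x y hxy
    by_cases hx : x ∈ s <;> by_cases hy : y ∈ s
    · rw [dif_pos hx, dif_pos hy] at hxy
      by_cases hx1 : x = a ∨ x = b <;> by_cases hy1 : y = a ∨ y = b
      · exact horb1 x y hx1 hy1
      · rw [if_pos hx1, if_neg hy1] at hxy; simp at hxy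
      · rw [if_neg hx1, if_pos hy1] at hxy; simp at hxy
      · exact horb2 x y (((hmem x).mp hx).resolve_left hx1) (((hmem y).mp hy).resolve_left hy1)
    · rw [dif_pos hx, dif_neg hy] at hxy
      rcases ite_eq_or_eq (x = a ∨ x = b) (Sum.inr true) (Sum.inr false) with h' | h' <;>
        rw [h'] at hxy <;> simp at hxy
    · rw [dif_neg hx, dif_pos hy] at hxy
      rcases ite_eq_or_eq (y = a ∨ y = b) (Sum.inr true) (Sum.inr false) with h' | h' <;>
        rw [h'] at hxy <;> simp at hxy
    · rw [dif_neg hx, dif_neg hy, Sum.inl.injEq, Subtype.mk.injEq] at hxy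
      rw [hxy]; exact mem_orbit_self y
  · intro z
    rcases z with ⟨x, hx⟩ | bb
    · exact ⟨x, by beta_reduce; rw [dif_neg hx]⟩
    · rcases bb with _ | _
      · refine ⟨c, ?_⟩
        beta_reduce
        rw [dif_pos ((hmem c).mpr (by tauto)), if_neg (by push_neg; exact ⟨hac.symm, hbc.symm⟩)]
      · exact ⟨a, by beta_reduce; rw [dif_pos ((hmem a).mpr (by tauto)), if_pos (by tauto)]⟩
end mk2lemmas
lemma swap_comm_disj {a b c d : Fin n} (h1 : a ≠ c) (h2 : a ≠ d) (h3 : b ≠ c) (h4 : b ≠ d) :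
    Commute (Equiv.swap a b) (Equiv.swap c d) := by
  refine Equiv.ext fun x => ?_
  simp only [Equiv.Perm.mul_apply]
  rcases eq_or_ne x a with rfl | hxa
  · simp [Equiv.swap_apply_of_ne_of_ne h1 h2, Equiv.swap_apply_of_ne_of_ne h3 h4]
  rcases eq_or_ne x b with rfl | hxb
  · simp [Equiv.swap_apply_of_ne_of_ne h1 h2, Equiv.swap_apply_of_ne_of_ne h3 h4]
  rcases eq_or_ne x c with rfl | hxc
  · simp [Equiv.swap_apply_of_ne_of_ne h1.symm h3.symm,
      Equiv.swap_apply_of_ne_of_ne h2.symm h4.symm,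
      Equiv.swap_apply_of_ne_of_ne hxa hxb]
  rcases eq_or_ne x d with rfl | hxd
  · simp [Equiv.swap_apply_of_ne_of_ne h1.symm h3.symm,
      Equiv.swap_apply_of_ne_of_ne h2.symm h4.symm,
      Equiv.swap_apply_of_ne_of_ne hxa hxb]
  · simp [Equiv.swap_apply_of_ne_of_ne hxa hxb, Equiv.swap_apply_of_ne_of_ne hxc hxd]

lemma mk1_comm {a b c : Fin n} {v : Fin p → ZMod 3} (i j : Fin p) :
    Commute (mk1 a b c v i) (mk1 a b c v j) := (Commute.refl _).pow_pow _ _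

lemma mk2_comm {a b c d : Fin n} (h1 : a ≠ c) (h2 : a ≠ d) (h3 : b ≠ c) (h4 : b ≠ d)
    {u w : Fin p → ZMod 2} (i j : Fin p) :
    Commute (mk2 a b c d u w i) (mk2 a b c d u w j) := by
  have hAC : Commute (Equiv.swap a b) (Equiv.swap c d) := swap_comm_disj h1 h2 h3 h4
  exact (((Commute.refl _).pow_pow _ _).mul_right (hAC.pow_pow _ _)).mul_left
    (((hAC.symm.pow_pow _ _)).mul_right ((Commute.refl _).pow_pow _ _))

lemma card4_nonempty {s : Finset (Fin n)} (h : s.card = 4) : s.Nonempty :=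
  Finset.card_pos.mp (by rw [h]; norm_num)

lemma sdiff_card2 {s t : Finset (Fin n)} (hs : s.card = 4) (hsub : t ⊆ s) (ht : t.card = 2) :
    (s \ t).card = 2 := by rw [Finset.card_sdiff_of_subset hsub, hs, ht]

def Cfg1 (p n : ℕ) : Type :=
  {s : Finset (Fin n) // s.card = 3} × {v : Fin p → ZMod 3 // v ≠ 0}

def Cfg2 (p n : ℕ) : Type :=
  Σ s : {s : Finset (Fin n) // s.card = 4},
    ({t : Finset (Fin n) // t ⊆ s.1 ∧ t.card = 2 ∧ s.1.min' (card4_nonempty s.2) ∈ t} ×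
     {v : Fin p → ZMod 2 // v ≠ 0} × {w : Fin p → ZMod 2 // w ≠ 0})

instance : Fintype (Cfg1 p n) := by unfold Cfg1; infer_instance
instance : Fintype (Cfg2 p n) := by unfold Cfg2; infer_instance

noncomputable def Phi : Cfg1 p n ⊕ Cfg2 p n → (Fin p → Equiv.Perm (Fin n))
  | .inl cfg =>
      mk1 (el3 cfg.1.1 cfg.1.2).1 (el3 cfg.1.1 cfg.1.2).2.1 (el3 cfg.1.1 cfg.1.2).2.2 cfg.2.1
  | .inr cfg =>
      mk2 (el2 cfg.2.1.1 cfg.2.1.2.2.1).1 (el2 cfg.2.1.1 cfg.2.1.2.2.1).2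
        (el2 (cfg.1.1 \ cfg.2.1.1) (sdiff_card2 cfg.1.2 cfg.2.1.2.1 cfg.2.1.2.2.1)).1
        (el2 (cfg.1.1 \ cfg.2.1.1) (sdiff_card2 cfg.1.2 cfg.2.1.2.1 cfg.2.1.2.2.1)).2
        cfg.2.2.1.1 cfg.2.2.2.1

/-- distinctness of the four points of a case-2 configuration -/
lemma cfg2_distinct {s t : Finset (Fin n)} (hs : s.card = 4) (hsub : t ⊆ s) (ht : t.card = 2)
    {a b c d : Fin n} (habt : t = {a, b}) (hcdt : s \ t = {c, d}) :
    a ≠ c ∧ a ≠ d ∧ b ≠ c ∧ b ≠ d := by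
  have hdisj : Disjoint t (s \ t) := Finset.disjoint_sdiff
  have ha : a ∈ t := by rw [habt]; simp
  have hb : b ∈ t := by rw [habt]; simp
  have hc : c ∈ s \ t := by rw [hcdt]; simp
  have hd : d ∈ s \ t := by rw [hcdt]; simp
  refine ⟨?_, ?_, ?_, ?_⟩ <;> rintro rfl
  · exact (Finset.disjoint_left.mp hdisj ha) hc
  · exact (Finset.disjoint_left.mp hdisj ha) hd
  · exact (Finset.disjoint_left.mp hdisj hb) hc
  · exact (Finset.disjoint_left.mp hdisj hb) hd

lemma Phi_mem (cfg : Cfg1 p n ⊕ Cfg2 p n) :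
    (∀ i j, Commute (Phi cfg i) (Phi cfg j)) ∧
      Nat.card (MulAction.orbitRel.Quotient
        (Subgroup.closure (Set.range (Phi cfg))) (Fin n)) = n - 2 := by
  rcases cfg with cfg | cfg
  · obtain ⟨hab, hac, hbc, hset⟩ := el3_spec cfg.1.1 cfg.1.2
    exact ⟨fun i j => mk1_comm i j, mk1_card hab hac hbc cfg.2.2⟩
  · obtain ⟨hab, habt⟩ := el2_spec cfg.2.1.1 cfg.2.1.2.2.1
    obtain ⟨hcd, hcdt⟩ := el2_spec (cfg.1.1 \ cfg.2.1.1)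
      (sdiff_card2 cfg.1.2 cfg.2.1.2.1 cfg.2.1.2.2.1)
    obtain ⟨h1, h2, h3, h4⟩ := cfg2_distinct cfg.1.2 cfg.2.1.2.1 cfg.2.1.2.2.1 habt hcdt
    exact ⟨fun i j => mk2_comm h1 h2 h3 h4 i j,
      mk2_card hab hcd h1 h2 h3 h4 cfg.2.2.1.2 cfg.2.2.2.2⟩

noncomputable def PhiS : Cfg1 p n ⊕ Cfg2 p n →
    {σ : Fin p → Equiv.Perm (Fin n) //
      (∀ i j, Commute (σ i) (σ j)) ∧
      Nat.card (MulAction.orbitRel.Quotient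
        (Subgroup.closure (Set.range σ)) (Fin n)) = n - 2} :=
  fun cfg => ⟨Phi cfg, Phi_mem cfg⟩
def movedSet (τ : Fin p → Equiv.Perm (Fin n)) : Finset (Fin n) :=
  Finset.univ.filter (fun x => ∃ i, τ i x ≠ x)

lemma mem_movedSet {τ : Fin p → Equiv.Perm (Fin n)} {x : Fin n} :
    x ∈ movedSet τ ↔ ∃ i, τ i x ≠ x := by simp [movedSet]

section movedlemmas
variable {a b c d : Fin n}

lemma moved_mk1 (hab : a ≠ b) (hac : a ≠ c) (hbc : b ≠ c) {v : Fin p → ZMod 3} (hv : v ≠ 0) :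
    movedSet (mk1 a b c v) = {a, b, c} := by
  obtain ⟨i, hi⟩ : ∃ i, v i ≠ 0 := Function.ne_iff.mp hv
  ext x
  rw [mem_movedSet]
  constructor
  · intro ⟨j, hj⟩
    by_contra hx
    simp only [Finset.mem_insert, Finset.mem_singleton] at hx
    push_neg at hx
    exact hj (mk1_fix hab hac hbc hx.1 hx.2.1 hx.2.2 j)
  · intro hx
    simp only [Finset.mem_insert, Finset.mem_singleton] at hx
    refine ⟨i, ?_⟩
    rcases zmod3_cases (v i) with h | h | h
    · exact absurd h hi
    · rw [mk1_1 hab hac hbc h]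
      rcases hx with rfl | rfl | rfl
      · rw [rho_a hab hac hbc]; exact hab.symm
      · rw [rho_b hab hac hbc]; exact hbc.symm
      · rw [rho_c]; exact hac
    · rw [mk1_2 hab hac hbc h]
      rcases hx with rfl | rfl | rfl
      · rw [rho2_a hab hac hbc]; exact hac.symm
      · rw [rho2_b hab hac hbc]; exact hab
      · rw [rho2_c hab hac hbc]; exact hbc

lemma moved_mk2 (hab : a ≠ b) (hcd : c ≠ d) (hac : a ≠ c) (had : a ≠ d) (hbc : b ≠ c)
    (hbd : b ≠ d) {u w : Fin p → ZMod 2} (hu : u ≠ 0) (hw : w ≠ 0) :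
    movedSet (mk2 a b c d u w) = {a, b, c, d} := by
  obtain ⟨i1, hi1⟩ : ∃ i, u i ≠ 0 := Function.ne_iff.mp hu
  obtain ⟨i2, hi2⟩ : ∃ i, w i ≠ 0 := Function.ne_iff.mp hw
  have hu1 : u i1 = 1 := (zmod2_cases (u i1)).resolve_left hi1
  have hw1 : w i2 = 1 := (zmod2_cases (w i2)).resolve_left hi2
  ext x
  rw [mem_movedSet]
  constructor
  · intro ⟨j, hj⟩
    by_contra hx
    simp only [Finset.mem_insert, Finset.mem_singleton] at hx
    push_neg at hx
    exact hj (mk2_fix hac had hbc hbd hx.1 hx.2.1 hx.2.2.1 hx.2.2.2 j)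
  · intro hx
    simp only [Finset.mem_insert, Finset.mem_singleton] at hx
    rcases hx with rfl | rfl | rfl | rfl
    · exact ⟨i1, by rw [mk2_a1 hac had hu1]; exact hab.symm⟩
    · exact ⟨i1, by rw [mk2_b1 hbc hbd hu1]; exact hab⟩
    · exact ⟨i2, by rw [mk2_c1 had hbd hw1]; exact hcd.symm⟩
    · exact ⟨i2, by rw [mk2_d1 hac hbc hw1]; exact hcd⟩

lemma mk1_recover (hab : a ≠ b) (hac : a ≠ c) (hbc : b ≠ c) {v v' : Fin p → ZMod 3}
    (h : mk1 a b c v = mk1 a b c v') : v = v' := by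
  have key : ∀ (vv : Fin p → ZMod 3) (i : Fin p),
      vv i = if mk1 a b c vv i a = a then 0 else if mk1 a b c vv i a = b then 1 else 2 := by
    intro vv i
    rcases zmod3_cases (vv i) with h1 | h1 | h1
    · rw [h1, mk1_0 hab hac hbc h1]; simp
    · rw [h1, mk1_1 hab hac hbc h1, rho_a hab hac hbc, if_neg hab.symm, if_pos rfl]
    · rw [h1, mk1_2 hab hac hbc h1, rho2_a hab hac hbc, if_neg hac.symm, if_neg hbc.symm]
  funext i
  rw [key v i, key v' i, h]

lemma mk2_recover (hab : a ≠ b) (hcd : c ≠ d) (hac : a ≠ c) (had : a ≠ d) (hbc : b ≠ c)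
    (hbd : b ≠ d) {u w u' w' : Fin p → ZMod 2}
    (h : mk2 a b c d u w = mk2 a b c d u' w') : u = u' ∧ w = w' := by
  have keyu : ∀ (uu ww : Fin p → ZMod 2) (i : Fin p),
      uu i = if mk2 a b c d uu ww i a = a then 0 else 1 := by
    intro uu ww i
    rcases zmod2_cases (uu i) with h1 | h1
    · rw [h1, mk2_a0 hac had h1, if_pos rfl]
    · rw [h1, mk2_a1 hac had h1, if_neg hab.symm]
  have keyw : ∀ (uu ww : Fin p → ZMod 2) (i : Fin p),
      ww i = if mk2 a b c d uu ww i c = c then 0 else 1 := by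
    intro uu ww i
    rcases zmod2_cases (ww i) with h1 | h1
    · rw [h1, mk2_c0 hac hbc h1, if_pos rfl]
    · rw [h1, mk2_c1 had hbd h1, if_neg hcd.symm]
  constructor
  · funext i; rw [keyu u w i, keyu u' w' i, h]
  · funext i; rw [keyw u w i, keyw u' w' i, h]

lemma mk2_t_mem (hab : a ≠ b) (hcd : c ≠ d) (hac : a ≠ c) (had : a ≠ d) (hbc : b ≠ c)
    (hbd : b ≠ d) {u w : Fin p → ZMod 2} (hu : u ≠ 0) {m x : Fin n} (hm : m = a ∨ m = b) :
    (x = a ∨ x = b) ↔ (x = m ∨ ∃ i, mk2 a b c d u w i m = x) := by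
  obtain ⟨i1, hi1⟩ : ∃ i, u i ≠ 0 := Function.ne_iff.mp hu
  have hu1 : u i1 = 1 := (zmod2_cases (u i1)).resolve_left hi1
  constructor
  · intro hx
    by_cases hxm : x = m
    · exact Or.inl hxm
    · refine Or.inr ⟨i1, ?_⟩
      rcases hm with rfl | rfl
      · rw [mk2_a1 hac had hu1]
        rcases hx with rfl | rfl
        · exact absurd rfl hxm
        · rfl
      · rw [mk2_b1 hbc hbd hu1]
        rcases hx with rfl | rfl
        · rfl
        · exact absurd rfl hxm
  · rintro (rfl | ⟨i, rfl⟩)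
    · exact hm
    · rcases mk2_pres1 (u := u) (w := w) hac had hbc hbd hm i with h' | h' <;> rw [h'] <;> tauto
end movedlemmas

lemma Phi_injective : Function.Injective (Phi (p := p) (n := n)) := by
  classical
  rintro (⟨⟨s, hs⟩, ⟨v, hv⟩⟩ | ⟨⟨s, hs⟩, ⟨⟨t, htsub, htc, htm⟩, ⟨u, hu⟩, ⟨w, hw⟩⟩⟩)
    (⟨⟨s', hs'⟩, ⟨v', hv'⟩⟩ | ⟨⟨s', hs'⟩, ⟨⟨t', htsub', htc', htm'⟩, ⟨u', hu'⟩, ⟨w', hw'⟩⟩⟩) h <;>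
    simp only [Phi] at h
  · -- inl / inl
    obtain ⟨hab, hac, hbc, hset⟩ := el3_spec s hs
    obtain ⟨hab', hac', hbc', hset'⟩ := el3_spec s' hs'
    set a := (el3 s hs).1 with ha; set b := (el3 s hs).2.1 with hb; set c := (el3 s hs).2.2 with hc
    set a' := (el3 s' hs').1 with ha'; set b' := (el3 s' hs').2.1 with hb'
    set c' := (el3 s' hs').2.2 with hc'
    have hmv := congrArg movedSet h
    rw [moved_mk1 hab hac hbc hv, moved_mk1 hab' hac' hbc' hv', ← hset, ← hset'] at hmv
    subst hmv
    have haa : a = a' := by rw [ha, ha']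
    have hbb : b = b' := by rw [hb, hb']
    have hcc : c = c' := by rw [hc, hc']
    rw [← haa, ← hbb, ← hcc] at h
    have hvv : v = v' := mk1_recover hab hac hbc h
    subst hvv
    rfl
  · -- inl / inr : impossible
    exfalso
    obtain ⟨hab, hac, hbc, hset⟩ := el3_spec s hs
    obtain ⟨hab', habt'⟩ := el2_spec t' htc'
    obtain ⟨hcd', hcdt'⟩ := el2_spec (s' \ t') (sdiff_card2 hs' htsub' htc')
    obtain ⟨h1, h2, h3, h4⟩ := cfg2_distinct hs' htsub' htc' habt' hcdt'
    set a := (el3 s hs).1; set b := (el3 s hs).2.1; set c := (el3 s hs).2.2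
    set a' := (el2 t' htc').1; set b' := (el2 t' htc').2
    set c' := (el2 (s' \ t') (sdiff_card2 hs' htsub' htc')).1
    set d' := (el2 (s' \ t') (sdiff_card2 hs' htsub' htc')).2
    have hmv := congrArg movedSet h
    rw [moved_mk1 hab hac hbc hv, moved_mk2 hab' hcd' h1 h2 h3 h4 hu' hw'] at hmv
    have c3 : ({a, b, c} : Finset (Fin n)).card = 3 :=
      Finset.card_eq_three.mpr ⟨a, b, c, hab, hac, hbc, rfl⟩
    have c4 : ({a', b', c', d'} : Finset (Fin n)).card = 4 := by
      rw [Finset.card_insert_of_notMem (by simp [hab', h1, h2]),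
        Finset.card_insert_of_notMem (by simp [h3, h4]),
        Finset.card_insert_of_notMem (by simp [hcd'])]
      simp
    rw [hmv] at c3
    rw [c3] at c4
    norm_num at c4
  · -- inr / inl : impossible
    exfalso
    obtain ⟨hab', hac', hbc', hset'⟩ := el3_spec s' hs'
    obtain ⟨hab, habt⟩ := el2_spec t htc
    obtain ⟨hcd, hcdt⟩ := el2_spec (s \ t) (sdiff_card2 hs htsub htc)
    obtain ⟨h1, h2, h3, h4⟩ := cfg2_distinct hs htsub htc habt hcdt
    set a := (el2 t htc).1; set b := (el2 t htc).2
    set c := (el2 (s \ t) (sdiff_card2 hs htsub htc)).1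
    set d := (el2 (s \ t) (sdiff_card2 hs htsub htc)).2
    set a' := (el3 s' hs').1; set b' := (el3 s' hs').2.1; set c' := (el3 s' hs').2.2
    have hmv := congrArg movedSet h
    rw [moved_mk2 hab hcd h1 h2 h3 h4 hu hw, moved_mk1 hab' hac' hbc' hv'] at hmv
    have c4 : ({a, b, c, d} : Finset (Fin n)).card = 4 := by
      rw [Finset.card_insert_of_notMem (by simp [hab, h1, h2]),
        Finset.card_insert_of_notMem (by simp [h3, h4]),
        Finset.card_insert_of_notMem (by simp [hcd])]
      simp
    have c3 : ({a', b', c'} : Finset (Fin n)).card = 3 :=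
      Finset.card_eq_three.mpr ⟨a', b', c', hab', hac', hbc', rfl⟩
    rw [hmv] at c4
    rw [c4] at c3
    norm_num at c3
  · -- inr / inr
    obtain ⟨hab, habt⟩ := el2_spec t htc
    obtain ⟨hcd, hcdt⟩ := el2_spec (s \ t) (sdiff_card2 hs htsub htc)
    obtain ⟨h1, h2, h3, h4⟩ := cfg2_distinct hs htsub htc habt hcdt
    obtain ⟨hab', habt'⟩ := el2_spec t' htc'
    obtain ⟨hcd', hcdt'⟩ := el2_spec (s' \ t') (sdiff_card2 hs' htsub' htc')
    obtain ⟨h1', h2', h3', h4'⟩ := cfg2_distinct hs' htsub' htc' habt' hcdt'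
    set a := (el2 t htc).1 with hadef; set b := (el2 t htc).2 with hbdef
    set c := (el2 (s \ t) (sdiff_card2 hs htsub htc)).1 with hcdef
    set d := (el2 (s \ t) (sdiff_card2 hs htsub htc)).2 with hddef
    set a' := (el2 t' htc').1 with hadef'; set b' := (el2 t' htc').2 with hbdef'
    set c' := (el2 (s' \ t') (sdiff_card2 hs' htsub' htc')).1 with hcdef'
    set d' := (el2 (s' \ t') (sdiff_card2 hs' htsub' htc')).2 with hddef'
    -- the underlying 4-sets agree
    have hmv := congrArg movedSet h
    rw [moved_mk2 hab hcd h1 h2 h3 h4 hu hw, moved_mk2 hab' hcd' h1' h2' h3' h4' hu' hw'] at hmv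
    have hsmem : ∀ z, z ∈ s ↔ z ∈ ({a, b, c, d} : Finset (Fin n)) := by
      intro z
      constructor
      · intro hz
        by_cases hzt : z ∈ t
        · rw [habt] at hzt; simp only [Finset.mem_insert, Finset.mem_singleton] at hzt ⊢; tauto
        · have : z ∈ s \ t := Finset.mem_sdiff.mpr ⟨hz, hzt⟩
          rw [hcdt] at this
          simp only [Finset.mem_insert, Finset.mem_singleton] at this ⊢; tauto
      · intro hz
        simp only [Finset.mem_insert, Finset.mem_singleton] at hz
        have hat : a ∈ t := by rw [habt]; simp
        have hbt : b ∈ t := by rw [habt]; simp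
        have hct : c ∈ s \ t := by rw [hcdt]; simp
        have hdt : d ∈ s \ t := by rw [hcdt]; simp
        rcases hz with rfl | rfl | rfl | rfl
        · exact htsub hat
        · exact htsub hbt
        · exact (Finset.mem_sdiff.mp hct).1
        · exact (Finset.mem_sdiff.mp hdt).1
    have hsmem' : ∀ z, z ∈ s' ↔ z ∈ ({a', b', c', d'} : Finset (Fin n)) := by
      intro z
      constructor
      · intro hz
        by_cases hzt : z ∈ t'
        · rw [habt'] at hzt; simp only [Finset.mem_insert, Finset.mem_singleton] at hzt ⊢; tauto
        · have : z ∈ s' \ t' := Finset.mem_sdiff.mpr ⟨hz, hzt⟩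
          rw [hcdt'] at this
          simp only [Finset.mem_insert, Finset.mem_singleton] at this ⊢; tauto
      · intro hz
        simp only [Finset.mem_insert, Finset.mem_singleton] at hz
        have hat : a' ∈ t' := by rw [habt']; simp
        have hbt : b' ∈ t' := by rw [habt']; simp
        have hct : c' ∈ s' \ t' := by rw [hcdt']; simp
        have hdt : d' ∈ s' \ t' := by rw [hcdt']; simp
        rcases hz with rfl | rfl | rfl | rfl
        · exact htsub' hat
        · exact htsub' hbt
        · exact (Finset.mem_sdiff.mp hct).1
        · exact (Finset.mem_sdiff.mp hdt).1
    have hss : s = s' := by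
      ext z; rw [hsmem z, hsmem' z, hmv]
    subst hss
    -- the distinguished pairs agree
    have hmt : s.min' (card4_nonempty hs) ∈ t := htm
    have hmt' : s.min' (card4_nonempty hs) ∈ t' := htm'
    have hm : s.min' (card4_nonempty hs) = a ∨ s.min' (card4_nonempty hs) = b := by
      have := hmt; rw [habt] at this
      simpa using this
    have hm' : s.min' (card4_nonempty hs) = a' ∨ s.min' (card4_nonempty hs) = b' := by
      have := hmt'; rw [habt'] at this
      simpa using this
    have htt : t = t' := by
      ext x
      have e1 : x ∈ t ↔ (x = a ∨ x = b) := by rw [habt]; simp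
      have e2 : x ∈ t' ↔ (x = a' ∨ x = b') := by rw [habt']; simp
      rw [e1, e2, mk2_t_mem hab hcd h1 h2 h3 h4 hu hm,
        mk2_t_mem hab' hcd' h1' h2' h3' h4' hu' hm', ← h]
    subst htt
    have haa : a = a' := by rw [hadef, hadef']
    have hbb : b = b' := by rw [hbdef, hbdef']
    have hcc : c = c' := by rw [hcdef, hcdef']
    have hdd : d = d' := by rw [hddef, hddef']
    rw [← haa, ← hbb, ← hcc, ← hdd] at h
    obtain ⟨huu, hww⟩ := mk2_recover hab hcd h1 h2 h3 h4 h
    subst huu; subst hww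
    rfl
lemma sum_two {ι : Type*} [Fintype ι] [DecidableEq ι] {f : ι → ℕ} (h : ∑ q, f q = 2) :
    (∃ q, f q = 2 ∧ ∀ r, r ≠ q → f r = 0) ∨
    (∃ q r, q ≠ r ∧ f q = 1 ∧ f r = 1 ∧ ∀ t, t ≠ q → t ≠ r → f t = 0) := by
  obtain ⟨q, hq⟩ : ∃ q, f q ≠ 0 := by
    by_contra hcon
    push_neg at hcon
    rw [Finset.sum_congr rfl (fun x _ => hcon x)] at h
    simp at h
  have hle : f q ≤ 2 := h ▸ Finset.single_le_sum (fun i _ => Nat.zero_le _) (Finset.mem_univ q)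
  have hsplit : f q + ∑ r ∈ Finset.univ.erase q, f r = 2 := by
    rw [Finset.add_sum_erase _ f (Finset.mem_univ q)]; exact h
  rcases (by omega : f q = 2 ∨ f q = 1) with h2 | h1
  · left
    refine ⟨q, h2, fun r hr => ?_⟩
    have : ∑ r ∈ Finset.univ.erase q, f r = 0 := by omega
    exact Finset.sum_eq_zero_iff.mp this r (Finset.mem_erase.mpr ⟨hr, Finset.mem_univ r⟩)
  · right
    have hrest : ∑ r ∈ Finset.univ.erase q, f r = 1 := by omega
    obtain ⟨r, hrmem, hr⟩ : ∃ r ∈ Finset.univ.erase q, f r ≠ 0 := by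
      by_contra hcon
      push_neg at hcon
      rw [Finset.sum_congr rfl hcon] at hrest
      simp at hrest
    have hrle : f r ≤ 1 := hrest ▸ Finset.single_le_sum (fun i _ => Nat.zero_le _) hrmem
    have hr1 : f r = 1 := by omega
    have hsplit2 : f r + ∑ x ∈ (Finset.univ.erase q).erase r, f x = 1 := by
      rw [Finset.add_sum_erase _ f hrmem]; exact hrest
    refine ⟨q, r, fun hqr => (Finset.mem_erase.mp hrmem).1 hqr.symm, h1, hr1, fun t ht1 ht2 => ?_⟩
    have : ∑ x ∈ (Finset.univ.erase q).erase r, f x = 0 := by omega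
    exact Finset.sum_eq_zero_iff.mp this t
      (Finset.mem_erase.mpr ⟨ht2, Finset.mem_erase.mpr ⟨ht1, Finset.mem_univ t⟩⟩)

section orbitfacts
variable (τ : Fin p → Equiv.Perm (Fin n))

lemma q_orbit_eq (q : orbitRel.Quotient (Subgroup.closure (Set.range τ)) (Fin n)) {x : Fin n}
    (hx : x ∈ q.orbit) : q.orbit = orbit (Subgroup.closure (Set.range τ)) x := by
  have hq : Quotient.mk'' x = q := orbitRel.Quotient.mem_orbit.mp hx
  ext y
  rw [orbitRel.Quotient.mem_orbit, ← hq, Quotient.eq'', orbitRel_apply]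

lemma mem_own_orbit (x : Fin n) :
    x ∈ MulAction.orbitRel.Quotient.orbit (G := ↥(Subgroup.closure (Set.range τ)))
      (Quotient.mk'' x) :=
  orbitRel.Quotient.mem_orbit.mpr rfl

lemma q_inv (q : orbitRel.Quotient (Subgroup.closure (Set.range τ)) (Fin n)) {x : Fin n}
    (hx : x ∈ q.orbit) (i : Fin p) : τ i x ∈ q.orbit := by
  rw [q_orbit_eq τ q hx, orbit_iff']
  exact ⟨τ i, mem_cl τ i, rfl⟩

lemma q_stab (hc : ∀ i j, Commute (τ i) (τ j))
    (q : orbitRel.Quotient (Subgroup.closure (Set.range τ)) (Fin n)) {x y : Fin n}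
    (hx : x ∈ q.orbit) (hy : y ∈ q.orbit) (i : Fin p) (hfix : τ i x = x) : τ i y = y := by
  rw [q_orbit_eq τ q hx, orbit_iff'] at hy
  obtain ⟨g, hg, rfl⟩ := hy
  have hcomm := commute_cl τ hc i g hg
  calc τ i (g x) = (τ i * g) x := rfl
  _ = (g * τ i) x := by rw [hcomm]
  _ = g x := by rw [Equiv.Perm.mul_apply, hfix]

lemma q_singleton (q : orbitRel.Quotient (Subgroup.closure (Set.range τ)) (Fin n))
    (hq : Nat.card q.orbit = 1) {x : Fin n} (hx : x ∈ q.orbit) (i : Fin p) : τ i x = x := by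
  rw [Nat.card_coe_set_eq, Set.ncard_eq_one] at hq
  obtain ⟨z, hz⟩ := hq
  have hxz : x = z := by rw [hz] at hx; exact hx
  have := q_inv τ q hx i
  rw [hz] at this
  rw [this, hxz]

lemma q_nontrivial (q : orbitRel.Quotient (Subgroup.closure (Set.range τ)) (Fin n))
    (hq : 2 ≤ Nat.card q.orbit) {x : Fin n} (hx : x ∈ q.orbit) : ∃ i, τ i x ≠ x := by
  by_contra hcon
  push_neg at hcon
  have horb : q.orbit = {x} := by
    rw [q_orbit_eq τ q hx]
    ext y
    rw [orbit_iff']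
    constructor
    · rintro ⟨g, hg, rfl⟩
      exact fix_cl τ x hcon g hg
    · rintro rfl
      exact ⟨1, Subgroup.one_mem _, rfl⟩
  rw [horb, Nat.card_coe_set_eq, Set.ncard_singleton] at hq
  omega

lemma orbit_sum :
    letI : Fintype (orbitRel.Quotient (Subgroup.closure (Set.range τ)) (Fin n)) :=
      Fintype.ofFinite _
    ∑ q : orbitRel.Quotient (Subgroup.closure (Set.range τ)) (Fin n), Nat.card q.orbit = n := by
  letI : Fintype (orbitRel.Quotient (Subgroup.closure (Set.range τ)) (Fin n)) :=
    Fintype.ofFinite _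
  letI : ∀ q : orbitRel.Quotient (Subgroup.closure (Set.range τ)) (Fin n),
      Fintype q.orbit := fun q => Fintype.ofFinite _
  have e := (selfEquivSigmaOrbits' (Subgroup.closure (Set.range τ)) (Fin n))
  have h1 : Nat.card (Fin n) = Nat.card
      (Σ q : orbitRel.Quotient (Subgroup.closure (Set.range τ)) (Fin n), q.orbit) :=
    Nat.card_congr e
  rw [Nat.card_eq_fintype_card, Fintype.card_fin, Nat.card_eq_fintype_card,
    Fintype.card_sigma] at h1
  rw [Finset.sum_congr rfl fun q _ => (Nat.card_eq_fintype_card (α := q.orbit))]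
  exact h1.symm
end orbitfacts
lemma caseA_aux (τ : Fin p → Equiv.Perm (Fin n)) (t0 : Finset (Fin n)) (h3 : t0.card = 3)
    (hinv : ∀ i x, x ∈ t0 → τ i x ∈ t0)
    (hstab : ∀ i x y, x ∈ t0 → y ∈ t0 → τ i x = x → τ i y = y)
    (hnt : ∀ x ∈ t0, ∃ i, τ i x ≠ x)
    (hfix : ∀ x, x ∉ t0 → ∀ i, τ i x = x) :
    ∃ cfg : Cfg1 p n ⊕ Cfg2 p n, Phi cfg = τ := by
  classical
  obtain ⟨hab, hac, hbc, hset⟩ := el3_spec t0 h3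
  set a := (el3 t0 h3).1 with hadef
  set b := (el3 t0 h3).2.1 with hbdef
  set c := (el3 t0 h3).2.2 with hcdef
  have hmem : ∀ x, x ∈ t0 ↔ x = a ∨ x = b ∨ x = c := by
    intro x; rw [hset]; simp
  have hat : a ∈ t0 := (hmem a).mpr (by tauto)
  have hbt : b ∈ t0 := (hmem b).mpr (by tauto)
  have hct : c ∈ t0 := (hmem c).mpr (by tauto)
  have hcases : ∀ i, τ i = 1 ∨ τ i = rho a b c ∨ τ i = rho a b c ^ 2 := by
    intro i
    by_cases hfa : τ i a = a
    · left
      refine Equiv.ext fun x => ?_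
      simp only [Equiv.Perm.one_apply]
      by_cases hx : x ∈ t0
      · exact hstab i a x hat hx hfa
      · exact hfix x hx i
    · have hfpf : ∀ x ∈ t0, τ i x ≠ x := fun x hx hxx => hfa (hstab i x a hx hat hxx)
      have hta : τ i a = b ∨ τ i a = c := by
        have := (hmem _).mp (hinv i a hat)
        rcases this with h' | h' | h'
        · exact absurd h' hfa
        · tauto
        · tauto
      rcases hta with hta | hta
      · -- τ i = rho a b c
        right; left
        have htb : τ i b = c := by
          have := (hmem _).mp (hinv i b hbt)
          rcases this with h' | h' | h'
          · exfalso
            have : τ i c ∈ t0 := hinv i c hct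
            rw [hmem] at this
            rcases this with h'' | h'' | h''
            · exact hbc ((τ i).injective (show (τ i) b = (τ i) c by rw [h', h'']))
            · exact hac ((τ i).injective (show (τ i) a = (τ i) c by rw [hta, h'']))
            · exact hfpf c hct h''
          · exact absurd h' (hfpf b hbt)
          · exact h'
        have htc : τ i c = a := by
          have := (hmem _).mp (hinv i c hct)
          rcases this with h' | h' | h'
          · exact h'
          · exact absurd ((τ i).injective (show (τ i) a = (τ i) c by rw [hta, h'])) hac
          · exact absurd h' (hfpf c hct)
        refine Equiv.ext fun x => ?_
        by_cases hx : x ∈ t0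
        · rcases (hmem x).mp hx with rfl | rfl | rfl
          · rw [hta, rho_a hab hac hbc]
          · rw [htb, rho_b hab hac hbc]
          · rw [htc, rho_c]
        · rw [hmem] at hx; push_neg at hx
          rw [hfix x ((hmem x).not.mpr (by tauto)) i, rho_fix hx.1 hx.2.1 hx.2.2]
      · -- τ i = rho ^ 2
        right; right
        have htb : τ i b = a := by
          have := (hmem _).mp (hinv i b hbt)
          rcases this with h' | h' | h'
          · exact h'
          · exact absurd h' (hfpf b hbt)
          · exact absurd ((τ i).injective (show (τ i) a = (τ i) b by rw [hta, h'])) hab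
        have htc : τ i c = b := by
          have := (hmem _).mp (hinv i c hct)
          rcases this with h' | h' | h'
          · exact absurd ((τ i).injective (show (τ i) b = (τ i) c by rw [htb, h'])) hbc
          · exact h'
          · exact absurd h' (hfpf c hct)
        refine Equiv.ext fun x => ?_
        by_cases hx : x ∈ t0
        · rcases (hmem x).mp hx with rfl | rfl | rfl
          · rw [hta, rho2_a hab hac hbc]
          · rw [htb, rho2_b hab hac hbc]
          · rw [htc, rho2_c hab hac hbc]
        · rw [hmem] at hx; push_neg at hx
          rw [hfix x ((hmem x).not.mpr (by tauto)) i]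
          rw [pow_two, Equiv.Perm.mul_apply, rho_fix hx.1 hx.2.1 hx.2.2,
            rho_fix hx.1 hx.2.1 hx.2.2]
      -- end
  have hrho_ne_one : rho a b c ≠ 1 := by
    intro hcon
    have := congrArg (fun e => Equiv.toFun e a) hcon
    rw [show (rho a b c).toFun a = rho a b c a from rfl, rho_a hab hac hbc] at this
    exact hab.symm (by simpa using this)
  have hrho2_ne_one : rho a b c ^ 2 ≠ 1 := by
    intro hcon
    have := congrArg (fun e => Equiv.toFun e a) hcon
    rw [show (rho a b c ^ 2).toFun a = (rho a b c ^ 2) a from rfl, rho2_a hab hac hbc] at this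
    exact hac.symm (by simpa using this)
  have hrho2_ne_rho : rho a b c ^ 2 ≠ rho a b c := by
    intro hcon
    have := congrArg (fun e => Equiv.toFun e a) hcon
    rw [show (rho a b c ^ 2).toFun a = (rho a b c ^ 2) a from rfl, rho2_a hab hac hbc,
      show (rho a b c).toFun a = rho a b c a from rfl, rho_a hab hac hbc] at this
    exact hbc (this.symm)
  set v : Fin p → ZMod 3 := fun i => if τ i = 1 then 0 else if τ i = rho a b c then 1 else 2
    with hvdef
  have hvτ : ∀ i, τ i = rho a b c ^ (v i).val := by
    intro i
    rcases hcases i with h' | h' | h'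
    · have hv0 : v i = 0 := by simp [hvdef, h']
      rw [hv0, zmod3_val0, pow_zero, h']
    · have hv1 : v i = 1 := by simp [hvdef, h', hrho_ne_one]
      rw [hv1, zmod3_val1, pow_one, h']
    · have hv2 : v i = 2 := by simp [hvdef, h', hrho2_ne_one, hrho2_ne_rho]
      rw [hv2, zmod3_val2, h']
  have hv : v ≠ 0 := by
    obtain ⟨i, hi⟩ := hnt a hat
    refine Function.ne_iff.mpr ⟨i, ?_⟩
    intro hcon
    have := hvτ i
    rw [hcon] at this
    simp only [Pi.zero_apply, zmod3_val0, pow_zero] at this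
    rw [this] at hi
    simp at hi
  refine ⟨Sum.inl ⟨⟨t0, h3⟩, ⟨v, hv⟩⟩, ?_⟩
  funext i
  simp only [Phi, mk1]
  exact (hvτ i).symm

lemma caseB_aux (τ : Fin p → Equiv.Perm (Fin n)) (t1 t2 : Finset (Fin n))
    (ht1 : t1.card = 2) (ht2 : t2.card = 2) (hdisj : Disjoint t1 t2)
    (hinv1 : ∀ i x, x ∈ t1 → τ i x ∈ t1) (hinv2 : ∀ i x, x ∈ t2 → τ i x ∈ t2)
    (hstab1 : ∀ i x y, x ∈ t1 → y ∈ t1 → τ i x = x → τ i y = y)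
    (hstab2 : ∀ i x y, x ∈ t2 → y ∈ t2 → τ i x = x → τ i y = y)
    (hnt1 : ∀ x ∈ t1, ∃ i, τ i x ≠ x) (hnt2 : ∀ x ∈ t2, ∃ i, τ i x ≠ x)
    (hfix : ∀ x, x ∉ t1 → x ∉ t2 → ∀ i, τ i x = x)
    (hm : ∃ z ∈ t1, ∀ y ∈ t1 ∪ t2, z ≤ y) :
    ∃ cfg : Cfg1 p n ⊕ Cfg2 p n, Phi cfg = τ := by
  classical
  set s : Finset (Fin n) := t1 ∪ t2 with hsdef
  have hs4 : s.card = 4 := by rw [hsdef, Finset.card_union_of_disjoint hdisj, ht1, ht2]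
  have hsub : t1 ⊆ s := Finset.subset_union_left
  have hsd : s \ t1 = t2 := Finset.union_sdiff_cancel_left hdisj
  obtain ⟨hab, habt⟩ := el2_spec t1 ht1
  obtain ⟨hcd, hcdt⟩ := el2_spec (s \ t1) (sdiff_card2 hs4 hsub ht1)
  obtain ⟨h1, h2, h3, h4⟩ := cfg2_distinct hs4 hsub ht1 habt hcdt
  set a := (el2 t1 ht1).1 with hadef
  set b := (el2 t1 ht1).2 with hbdef
  set c := (el2 (s \ t1) (sdiff_card2 hs4 hsub ht1)).1 with hcdef
  set d := (el2 (s \ t1) (sdiff_card2 hs4 hsub ht1)).2 with hddef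
  have ht2' : t2 = {c, d} := by rw [← hsd, hcdt]
  have hmem1 : ∀ x, x ∈ t1 ↔ x = a ∨ x = b := by intro x; rw [habt]; simp
  have hmem2 : ∀ x, x ∈ t2 ↔ x = c ∨ x = d := by intro x; rw [ht2']; simp
  have hat : a ∈ t1 := (hmem1 a).mpr (by tauto)
  have hbt : b ∈ t1 := (hmem1 b).mpr (by tauto)
  have hct : c ∈ t2 := (hmem2 c).mpr (by tauto)
  have hdt : d ∈ t2 := (hmem2 d).mpr (by tauto)
  set u : Fin p → ZMod 2 := fun i => if τ i a = a then 0 else 1 with hudef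
  set w : Fin p → ZMod 2 := fun i => if τ i c = c then 0 else 1 with hwdef
  have hτ : ∀ i, τ i = mk2 a b c d u w i := by
    intro i
    have hta : τ i a = a ∨ τ i a = b := (hmem1 _).mp (hinv1 i a hat)
    have htc : τ i c = c ∨ τ i c = d := (hmem2 _).mp (hinv2 i c hct)
    refine Equiv.ext fun x => ?_
    by_cases hx1 : x ∈ t1
    · rcases (hmem1 x).mp hx1 with rfl | rfl
      · rcases hta with h' | h'
        · have hu0 : u i = 0 := by simp [hudef, h']
          rw [h', mk2_a0 h1 h2 hu0]
        · have hu1 : u i = 1 := by simp [hudef, h', hab.symm]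
          rw [h', mk2_a1 h1 h2 hu1]
      · rcases hta with h' | h'
        · have hu0 : u i = 0 := by simp [hudef, h']
          have htb : τ i b = b := hstab1 i a b hat hbt h'
          rw [htb, mk2_b0 h3 h4 hu0]
        · have hu1 : u i = 1 := by simp [hudef, h', hab.symm]
          have htb : τ i b = a := by
            have := (hmem1 _).mp (hinv1 i b hbt)
            rcases this with h'' | h''
            · exact h''
            · exact absurd ((τ i).injective (show (τ i) a = (τ i) b by rw [h', h''])) hab
          rw [htb, mk2_b1 h3 h4 hu1]
    · by_cases hx2 : x ∈ t2
      · rcases (hmem2 x).mp hx2 with rfl | rfl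
        · rcases htc with h' | h'
          · have hw0 : w i = 0 := by simp [hwdef, h']
            rw [h', mk2_c0 h1 h3 hw0]
          · have hw1 : w i = 1 := by simp [hwdef, h', hcd.symm]
            rw [h', mk2_c1 h2 h4 hw1]
        · rcases htc with h' | h'
          · have hw0 : w i = 0 := by simp [hwdef, h']
            have htd : τ i d = d := hstab2 i c d hct hdt h'
            rw [htd, mk2_d0 h2 h4 hw0]
          · have hw1 : w i = 1 := by simp [hwdef, h', hcd.symm]
            have htd : τ i d = c := by
              have := (hmem2 _).mp (hinv2 i d hdt)
              rcases this with h'' | h''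
              · exact h''
              · exact absurd ((τ i).injective (show (τ i) c = (τ i) d by rw [h', h''])) hcd
            rw [htd, mk2_d1 h1 h3 hw1]
      · rw [hfix x hx1 hx2 i]
        rw [hmem1] at hx1; rw [hmem2] at hx2
        push_neg at hx1 hx2
        rw [mk2_fix h1 h2 h3 h4 hx1.1 hx1.2 hx2.1 hx2.2 i]
  have hu : u ≠ 0 := by
    obtain ⟨i, hi⟩ := hnt1 a hat
    refine Function.ne_iff.mpr ⟨i, ?_⟩
    simp [hudef, hi]
  have hw : w ≠ 0 := by
    obtain ⟨i, hi⟩ := hnt2 c hct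
    refine Function.ne_iff.mpr ⟨i, ?_⟩
    simp [hwdef, hi]
  have htm : s.min' (card4_nonempty hs4) ∈ t1 := by
    obtain ⟨z, hz1, hz2⟩ := hm
    have hz3 : z ∈ s := hsub hz1
    have hle1 : s.min' (card4_nonempty hs4) ≤ z := Finset.min'_le s z hz3
    have hle2 : z ≤ s.min' (card4_nonempty hs4) :=
      Finset.le_min' s (card4_nonempty hs4) z hz2
    have : s.min' (card4_nonempty hs4) = z := le_antisymm hle1 hle2
    rw [this]; exact hz1
  refine ⟨Sum.inr ⟨⟨s, hs4⟩, ⟨⟨t1, hsub, ht1, htm⟩, ⟨u, hu⟩, ⟨w, hw⟩⟩⟩, ?_⟩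
  funext i
  simp only [Phi]
  exact (hτ i).symm
lemma Phi_surjective (hn : 2 ≤ n) (τ : Fin p → Equiv.Perm (Fin n))
    (hc : ∀ i j, Commute (τ i) (τ j))
    (hcard : Nat.card (orbitRel.Quotient (Subgroup.closure (Set.range τ)) (Fin n)) = n - 2) :
    ∃ cfg : Cfg1 p n ⊕ Cfg2 p n, Phi cfg = τ := by
  classical
  letI : Fintype (orbitRel.Quotient (Subgroup.closure (Set.range τ)) (Fin n)) :=
    Fintype.ofFinite _
  have hsum := orbit_sum τ
  set g : orbitRel.Quotient (Subgroup.closure (Set.range τ)) (Fin n) → ℕ :=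
    fun q => Nat.card q.orbit with hgdef
  have hpos : ∀ q, 1 ≤ g q := by
    intro q
    haveI := (show q.orbit.Nonempty from
      ⟨q.out, orbitRel.Quotient.mem_orbit.mpr (Quotient.out_eq' q)⟩).to_subtype
    exact Nat.card_pos
  have hQc : Fintype.card (orbitRel.Quotient (Subgroup.closure (Set.range τ)) (Fin n)) = n - 2 :=
    by rw [← Nat.card_eq_fintype_card]; exact hcard
  have hsum2 : ∑ q, (g q - 1) = 2 := by
    have e1 : ∑ q, ((g q - 1) + 1) = ∑ q, g q :=
      Finset.sum_congr rfl fun q _ => by have := hpos q; omega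
    rw [Finset.sum_add_distrib, Finset.sum_const, smul_eq_mul, mul_one, Finset.card_univ,
      hQc] at e1
    have : ∑ q, g q = n := hsum
    omega
  rcases sum_two hsum2 with ⟨q0, hq0, hrest⟩ | ⟨q1, q2, hne, e1, e2, hrest⟩
  · -- one orbit of size 3
    have hg3 : g q0 = 3 := by have := hpos q0; omega
    letI : Fintype q0.orbit := Fintype.ofFinite _
    set t0 := q0.orbit.toFinset with ht0def
    have hmemt : ∀ x, x ∈ t0 ↔ x ∈ q0.orbit := fun x => Set.mem_toFinset
    have ht0c : t0.card = 3 := by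
      rw [ht0def, Set.toFinset_card, ← Nat.card_eq_fintype_card]; exact hg3
    have hfixout : ∀ x, x ∉ t0 → ∀ i, τ i x = x := by
      intro x hx i
      have hxq := mem_own_orbit τ x
      have hxne : (Quotient.mk'' x :
          orbitRel.Quotient (Subgroup.closure (Set.range τ)) (Fin n)) ≠ q0 := by
        intro hcon; rw [hcon] at hxq; exact hx ((hmemt x).mpr hxq)
      have hz := hrest _ hxne
      have hone : g (Quotient.mk'' x) = 1 := by have := hpos (Quotient.mk'' x); omega
      exact q_singleton τ _ hone hxq i
    apply caseA_aux τ t0 ht0c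
    · intro i x hx; exact (hmemt _).mpr (q_inv τ q0 ((hmemt x).mp hx) i)
    · intro i x y hx hy hf; exact q_stab τ hc q0 ((hmemt x).mp hx) ((hmemt y).mp hy) i hf
    · intro x hx
      exact q_nontrivial τ q0 (by rw [show Nat.card q0.orbit = g q0 from rfl, hg3]; omega)
        ((hmemt x).mp hx)
    · exact hfixout
  · -- two orbits of size 2
    have hg1 : g q1 = 2 := by have := hpos q1; omega
    have hg2 : g q2 = 2 := by have := hpos q2; omega
    letI : Fintype q1.orbit := Fintype.ofFinite _
    letI : Fintype q2.orbit := Fintype.ofFinite _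
    set t1 := q1.orbit.toFinset with ht1def
    set t2 := q2.orbit.toFinset with ht2def
    have hmemt1 : ∀ x, x ∈ t1 ↔ x ∈ q1.orbit := fun x => Set.mem_toFinset
    have hmemt2 : ∀ x, x ∈ t2 ↔ x ∈ q2.orbit := fun x => Set.mem_toFinset
    have ht1c : t1.card = 2 := by
      rw [ht1def, Set.toFinset_card, ← Nat.card_eq_fintype_card]; exact hg1
    have ht2c : t2.card = 2 := by
      rw [ht2def, Set.toFinset_card, ← Nat.card_eq_fintype_card]; exact hg2
    have hdisj : Disjoint t1 t2 := by
      rw [Finset.disjoint_left]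
      intro x hx1 hx2
      have e1' : Quotient.mk'' x = q1 := orbitRel.Quotient.mem_orbit.mp ((hmemt1 x).mp hx1)
      have e2' : Quotient.mk'' x = q2 := orbitRel.Quotient.mem_orbit.mp ((hmemt2 x).mp hx2)
      exact hne (e1' ▸ e2')
    have hfixout : ∀ x, x ∉ t1 → x ∉ t2 → ∀ i, τ i x = x := by
      intro x hx1 hx2 i
      have hxq := mem_own_orbit τ x
      have hxne1 : (Quotient.mk'' x :
          orbitRel.Quotient (Subgroup.closure (Set.range τ)) (Fin n)) ≠ q1 := by
        intro hcon; rw [hcon] at hxq; exact hx1 ((hmemt1 x).mpr hxq)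
      have hxne2 : (Quotient.mk'' x :
          orbitRel.Quotient (Subgroup.closure (Set.range τ)) (Fin n)) ≠ q2 := by
        intro hcon; rw [hcon] at hxq; exact hx2 ((hmemt2 x).mpr hxq)
      have hz := hrest _ hxne1 hxne2
      have hone : g (Quotient.mk'' x) = 1 := by have := hpos (Quotient.mk'' x); omega
      exact q_singleton τ _ hone hxq i
    have hinv1 : ∀ i x, x ∈ t1 → τ i x ∈ t1 := fun i x hx =>
      (hmemt1 _).mpr (q_inv τ q1 ((hmemt1 x).mp hx) i)
    have hinv2 : ∀ i x, x ∈ t2 → τ i x ∈ t2 := fun i x hx =>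
      (hmemt2 _).mpr (q_inv τ q2 ((hmemt2 x).mp hx) i)
    have hstab1 : ∀ i x y, x ∈ t1 → y ∈ t1 → τ i x = x → τ i y = y := fun i x y hx hy hf =>
      q_stab τ hc q1 ((hmemt1 x).mp hx) ((hmemt1 y).mp hy) i hf
    have hstab2 : ∀ i x y, x ∈ t2 → y ∈ t2 → τ i x = x → τ i y = y := fun i x y hx hy hf =>
      q_stab τ hc q2 ((hmemt2 x).mp hx) ((hmemt2 y).mp hy) i hf
    have hnt1 : ∀ x ∈ t1, ∃ i, τ i x ≠ x := fun x hx =>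
      q_nontrivial τ q1 (by rw [show Nat.card q1.orbit = g q1 from rfl, hg1]) ((hmemt1 x).mp hx)
    have hnt2 : ∀ x ∈ t2, ∃ i, τ i x ≠ x := fun x hx =>
      q_nontrivial τ q2 (by rw [show Nat.card q2.orbit = g q2 from rfl, hg2]) ((hmemt2 x).mp hx)
    have hUne : (t1 ∪ t2).Nonempty := by
      obtain ⟨x, hx⟩ := (show q1.orbit.Nonempty from
        ⟨q1.out, orbitRel.Quotient.mem_orbit.mpr (Quotient.out_eq' q1)⟩)
      exact ⟨x, Finset.mem_union_left _ ((hmemt1 x).mpr hx)⟩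
    set m := (t1 ∪ t2).min' hUne with hmdef
    have hmmem : m ∈ t1 ∪ t2 := Finset.min'_mem _ _
    rcases Finset.mem_union.mp hmmem with hm1 | hm2
    · exact caseB_aux τ t1 t2 ht1c ht2c hdisj hinv1 hinv2 hstab1 hstab2 hnt1 hnt2 hfixout
        ⟨m, hm1, fun y hy => Finset.min'_le _ y hy⟩
    · exact caseB_aux τ t2 t1 ht2c ht1c hdisj.symm hinv2 hinv1 hstab2 hstab1 hnt2 hnt1
        (fun x hx2 hx1 => hfixout x hx1 hx2)
        ⟨m, hm2, fun y hy => Finset.min'_le _ y (by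
          rcases Finset.mem_union.mp hy with h' | h'
          · exact Finset.mem_union_right _ h'
          · exact Finset.mem_union_left _ h')⟩
lemma card_t_three {s : Finset (Fin n)} (hs : s.card = 4) :
    Fintype.card {t : Finset (Fin n) // t ⊆ s ∧ t.card = 2 ∧ s.min' (card4_nonempty hs) ∈ t}
      = 3 := by
  classical
  set m := s.min' (card4_nonempty hs) with hmdef
  have hms : m ∈ s := Finset.min'_mem _ _
  rw [Fintype.card_subtype]
  have himg : Finset.univ.filter
      (fun t : Finset (Fin n) => t ⊆ s ∧ t.card = 2 ∧ m ∈ t)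
      = (s.erase m).image (fun x => ({m, x} : Finset (Fin n))) := by
    ext t
    simp only [Finset.mem_filter, Finset.mem_univ, true_and, Finset.mem_image]
    constructor
    · rintro ⟨hsub, hc2, hmt⟩
      obtain ⟨y, z, hyz, rfl⟩ := Finset.card_eq_two.mp hc2
      simp only [Finset.mem_insert, Finset.mem_singleton] at hmt
      rcases hmt with rfl | rfl
      · refine ⟨z, Finset.mem_erase.mpr ⟨hyz.symm, hsub (by simp)⟩, rfl⟩
      · refine ⟨y, Finset.mem_erase.mpr ⟨hyz, hsub (by simp)⟩, ?_⟩
        rw [Finset.pair_comm]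
    · rintro ⟨x, hx, rfl⟩
      obtain ⟨hxm, hxs⟩ := Finset.mem_erase.mp hx
      refine ⟨?_, ?_, by simp⟩
      · intro z hz
        simp only [Finset.mem_insert, Finset.mem_singleton] at hz
        rcases hz with rfl | rfl
        · exact hms
        · exact hxs
      · rw [Finset.card_insert_of_notMem (by simp [Ne.symm hxm]), Finset.card_singleton]
  rw [himg, Finset.card_image_of_injOn, Finset.card_erase_of_mem hms, hs]
  intro x hx y hy hxy
  have hxm : x ≠ m := (Finset.mem_erase.mp (Finset.mem_coe.mp hx)).1
  have hxy' : ({m, x} : Finset (Fin n)) = {m, y} := hxy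
  have : x ∈ ({m, y} : Finset (Fin n)) := by
    rw [← hxy']; simp
  simp only [Finset.mem_insert, Finset.mem_singleton] at this
  tauto

lemma card_V3 : Fintype.card {v : Fin p → ZMod 3 // v ≠ 0} = 3 ^ p - 1 := by
  classical
  have h1 : Fintype.card {v : Fin p → ZMod 3 // ¬ (v = 0)} =
      Fintype.card (Fin p → ZMod 3) - Fintype.card {v : Fin p → ZMod 3 // v = 0} :=
    Fintype.card_subtype_compl _
  have h2 : Fintype.card {v : Fin p → ZMod 3 // v = 0} = 1 := Fintype.card_subtype_eq 0
  have h3 : Fintype.card (Fin p → ZMod 3) = 3 ^ p := by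
    rw [Fintype.card_fun]
    simp
  have : Fintype.card {v : Fin p → ZMod 3 // v ≠ 0}
      = Fintype.card {v : Fin p → ZMod 3 // ¬ (v = 0)} := rfl
  rw [this, h1, h2, h3]

lemma card_V2 : Fintype.card {v : Fin p → ZMod 2 // v ≠ 0} = 2 ^ p - 1 := by
  classical
  have h1 : Fintype.card {v : Fin p → ZMod 2 // ¬ (v = 0)} =
      Fintype.card (Fin p → ZMod 2) - Fintype.card {v : Fin p → ZMod 2 // v = 0} :=
    Fintype.card_subtype_compl _
  have h2 : Fintype.card {v : Fin p → ZMod 2 // v = 0} = 1 := Fintype.card_subtype_eq 0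
  have h3 : Fintype.card (Fin p → ZMod 2) = 2 ^ p := by
    rw [Fintype.card_fun]
    simp
  have : Fintype.card {v : Fin p → ZMod 2 // v ≠ 0}
      = Fintype.card {v : Fin p → ZMod 2 // ¬ (v = 0)} := rfl
  rw [this, h1, h2, h3]

lemma card_Cfg1 : Nat.card (Cfg1 p n) = n.choose 3 * (3 ^ p - 1) := by
  classical
  rw [show Cfg1 p n = ({s : Finset (Fin n) // s.card = 3} × {v : Fin p → ZMod 3 // v ≠ 0})
    from rfl, Nat.card_eq_fintype_card, Fintype.card_prod, Fintype.card_finset_len,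
    Fintype.card_fin, card_V3]

lemma card_Cfg2 : Nat.card (Cfg2 p n) = n.choose 4 * (3 * ((2 ^ p - 1) * (2 ^ p - 1))) := by
  classical
  rw [show Cfg2 p n = (Σ s : {s : Finset (Fin n) // s.card = 4},
    ({t : Finset (Fin n) // t ⊆ s.1 ∧ t.card = 2 ∧ s.1.min' (card4_nonempty s.2) ∈ t} ×
     {v : Fin p → ZMod 2 // v ≠ 0} × {w : Fin p → ZMod 2 // w ≠ 0})) from rfl,
    Nat.card_eq_fintype_card, Fintype.card_sigma]
  have hconst : ∀ s : {s : Finset (Fin n) // s.card = 4},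
      Fintype.card ({t : Finset (Fin n) // t ⊆ s.1 ∧ t.card = 2 ∧
          s.1.min' (card4_nonempty s.2) ∈ t} ×
        {v : Fin p → ZMod 2 // v ≠ 0} × {w : Fin p → ZMod 2 // w ≠ 0})
      = 3 * ((2 ^ p - 1) * (2 ^ p - 1)) := by
    intro s
    rw [Fintype.card_prod, Fintype.card_prod, card_t_three s.2, card_V2]
  rw [Finset.sum_congr rfl fun s _ => hconst s, Finset.sum_const, smul_eq_mul,
    Finset.card_univ, Fintype.card_finset_len, Fintype.card_fin]

theorem stmt18 (p n : ℕ) (hp : 1 ≤ p) (hn : 2 ≤ n) :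
    A p n (n - 2) = n.choose 3 * (3 ^ p - 1) + 3 * n.choose 4 * (2 ^ p - 1) ^ 2 := by
  classical
  have hbij : Function.Bijective (PhiS (p := p) (n := n)) := by
    constructor
    · intro c1 c2 hc
      exact Phi_injective (congrArg Subtype.val hc)
    · rintro ⟨τ, hcomm, hcard⟩
      obtain ⟨cfg, hcfg⟩ := Phi_surjective hn τ hcomm hcard
      exact ⟨cfg, Subtype.ext hcfg⟩
  have h1 : Nat.card (Cfg1 p n ⊕ Cfg2 p n) = A p n (n - 2) :=
    Nat.card_eq_of_bijective _ hbij
  rw [← h1, Nat.card_sum, card_Cfg1, card_Cfg2]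
  ring
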